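/- Let X and Y be n-dimensional real inner product spaces and T : X → Y a linear operator. For every ε > 0, C(ε, T) ≥ |det √(T*T)| · (1/ε)ⁿ. -/

import Mathlib

open Metric ENNReal

/-- Covering number of an operator `T`: the minimal number of `ε`-balls in `Y`
needed to cover the image of the closed unit ball of `X`. -/
noncomputable def coveringNumber {X Y : Type*} [NormedAddCommGroup X] [NormedSpace ℝ X]
    [NormedAddCommGroup Y] [NormedSpace ℝ Y] (ε : ℝ) (T : X →L[ℝ] Y) : ℕ∞ :=
  sInf {n : ℕ∞ | ∃ t : Finset Y, (t.card : ℕ∞) = n ∧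
    T '' Metric.closedBall 0 1 ⊆ ⋃ y ∈ t, Metric.ball y ε}

open MeasureTheory RealInnerProductSpace in
/-- For `T : X → Y` between `n`-dimensional real inner product spaces,
`C(ε, T) ≥ |det √(T*T)| (1/ε)ⁿ`; here `|det √(T*T)| = √(det(T*T))` since `T*T` is
a positive operator. -/
theorem coveringNumber_lower_det {X Y : Type*}
    [NormedAddCommGroup X] [InnerProductSpace ℝ X] [FiniteDimensional ℝ X]
    [NormedAddCommGroup Y] [InnerProductSpace ℝ Y] [FiniteDimensional ℝ Y]
    (n : ℕ) (hX : Module.finrank ℝ X = n) (hY : Module.finrank ℝ Y = n)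
    (T : X →L[ℝ] Y) (ε : ℝ) (hε : 0 < ε) :
    ENNReal.ofReal
        (Real.sqrt (LinearMap.det
            (((ContinuousLinearMap.adjoint T).comp T : X →L[ℝ] X) : X →ₗ[ℝ] X))
          * (1 / ε) ^ n)
      ≤ (coveringNumber ε T : ℝ≥0∞) := by
  classical
  subst hX
  -- an isometric identification of `Y` with `X`
  let e : Y ≃ₗᵢ[ℝ] X :=
    ((stdOrthonormalBasis ℝ Y).reindex (finCongr hY)).repr.trans
      (stdOrthonormalBasis ℝ X).repr.symm
  set S : X →ₗ[ℝ] X := (e.toLinearEquiv : Y →ₗ[ℝ] X) ∘ₗ (T : X →ₗ[ℝ] Y) with hS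
  have hSapply : ∀ x, S x = e (T x) := fun x => rfl
  -- `T* T = S* S`
  have hcomp : (((ContinuousLinearMap.adjoint T).comp T : X →L[ℝ] X) : X →ₗ[ℝ] X)
      = (LinearMap.adjoint S) ∘ₗ S := by
    ext x
    refine ext_inner_right ℝ fun y => ?_
    have h1 : ⟪(LinearMap.adjoint S) (S x), y⟫ = ⟪S x, S y⟫ :=
      LinearMap.adjoint_inner_left S y (S x)
    have h2 : ⟪S x, S y⟫ = ⟪T x, T y⟫ := by
      rw [hSapply, hSapply]; exact e.inner_map_map _ _
    have h3 : ⟪(ContinuousLinearMap.adjoint T) (T x), y⟫ = ⟪T x, T y⟫ :=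
      ContinuousLinearMap.adjoint_inner_left T y (T x)
    simp only [LinearMap.comp_apply, ContinuousLinearMap.coe_coe,
      ContinuousLinearMap.comp_apply]
    rw [h1, h2, h3]
  -- determinant of the adjoint equals the determinant
  have hdetadj : LinearMap.det (LinearMap.adjoint S) = LinearMap.det S := by
    have b := stdOrthonormalBasis ℝ X
    rw [← LinearMap.det_toMatrix b.toBasis (LinearMap.adjoint S),
      ← LinearMap.det_toMatrix b.toBasis S, LinearMap.toMatrix_adjoint b b S,
      Matrix.det_conjTranspose]
    exact star_trivial _
  have hdet : Real.sqrt (LinearMap.det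
      (((ContinuousLinearMap.adjoint T).comp T : X →L[ℝ] X) : X →ₗ[ℝ] X))
      = |LinearMap.det S| := by
    rw [hcomp, LinearMap.det_comp, hdetadj, ← sq, Real.sqrt_sq_eq_abs]
  borelize X
  set μ : Measure X := (stdOrthonormalBasis ℝ X).toBasis.addHaar with hμ
  have hV0 : μ (closedBall (0 : X) 1) ≠ 0 :=
    ((measure_ball_pos μ 0 one_pos).trans_le
      (measure_mono ball_subset_closedBall)).ne'
  have hVtop : μ (closedBall (0 : X) 1) ≠ ⊤ :=
    (isCompact_closedBall (0 : X) 1).measure_lt_top.ne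
  rw [_root_.coveringNumber]
  set A : Set ℕ∞ := {m : ℕ∞ | ∃ t : Finset Y, (t.card : ℕ∞) = m ∧
    T '' Metric.closedBall 0 1 ⊆ ⋃ y ∈ t, Metric.ball y ε} with hA
  rcases A.eq_empty_or_nonempty with h | h
  · rw [h, sInf_empty, ENat.toENNReal_top]; exact le_top
  · obtain ⟨t, ht, hcov⟩ := csInf_mem h
    rw [← ht, ENat.toENNReal_coe]
    -- the image of the unit ball under `S` is covered by `t.card` balls of radius `ε`
    have hsub : S '' closedBall 0 1 ⊆ ⋃ y ∈ t, ball (e y) ε := by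
      rintro _ ⟨x, hx, rfl⟩
      have hmem : T x ∈ ⋃ y ∈ t, ball y ε := hcov ⟨x, hx, rfl⟩
      simp only [Set.mem_iUnion, mem_ball, exists_prop] at hmem ⊢
      obtain ⟨y, hyt, hy⟩ := hmem
      refine ⟨y, hyt, ?_⟩
      rw [hSapply, e.dist_map]
      exact hy
    have himg : μ (S '' closedBall 0 1)
        = ENNReal.ofReal |LinearMap.det S| * μ (closedBall 0 1) :=
      μ.addHaar_image_linearMap S _
    have hunion : μ (⋃ y ∈ t, ball (e y) ε)
        ≤ (t.card : ℝ≥0∞) * (ENNReal.ofReal (ε ^ Module.finrank ℝ X)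
            * μ (closedBall 0 1)) := by
      refine (measure_biUnion_finset_le t _).trans ?_
      have hball : ∀ y ∈ t, μ (ball (e y) ε)
          ≤ ENNReal.ofReal (ε ^ Module.finrank ℝ X) * μ (closedBall 0 1) :=
        fun y _ => (measure_mono ball_subset_closedBall).trans
          (μ.addHaar_closedBall' (e y) hε.le).le
      calc ∑ y ∈ t, μ (ball (e y) ε)
          ≤ ∑ _y ∈ t, (ENNReal.ofReal (ε ^ Module.finrank ℝ X)
              * μ (closedBall (0 : X) 1)) := Finset.sum_le_sum hball
        _ = (t.card : ℝ≥0∞) * (ENNReal.ofReal (ε ^ Module.finrank ℝ X)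
              * μ (closedBall 0 1)) := by
            rw [Finset.sum_const, nsmul_eq_mul]
    have key : ENNReal.ofReal |LinearMap.det S| * μ (closedBall (0 : X) 1)
        ≤ ((t.card : ℝ≥0∞) * ENNReal.ofReal (ε ^ Module.finrank ℝ X))
            * μ (closedBall (0 : X) 1) := by
      rw [← himg]
      refine (measure_mono hsub).trans (hunion.trans_eq ?_)
      ring
    have key2 : ENNReal.ofReal |LinearMap.det S|
        ≤ (t.card : ℝ≥0∞) * ENNReal.ofReal (ε ^ Module.finrank ℝ X) :=
      (ENNReal.mul_le_mul_iff_left hV0 hVtop).1 key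
    rw [hdet]
    have hεn0 : ENNReal.ofReal (ε ^ Module.finrank ℝ X) ≠ 0 :=
      (ENNReal.ofReal_pos.2 (pow_pos hε _)).ne'
    rw [← ENNReal.mul_le_mul_iff_left hεn0 ENNReal.ofReal_ne_top]
    calc ENNReal.ofReal (|LinearMap.det S| * (1 / ε) ^ Module.finrank ℝ X)
          * ENNReal.ofReal (ε ^ Module.finrank ℝ X)
        = ENNReal.ofReal (|LinearMap.det S| * (1 / ε) ^ Module.finrank ℝ X
            * ε ^ Module.finrank ℝ X) := by
          rw [← ENNReal.ofReal_mul (by positivity)]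
      _ = ENNReal.ofReal |LinearMap.det S| := by
          rw [mul_assoc, one_div, inv_pow, inv_mul_cancel₀
            (pow_ne_zero _ hε.ne'), mul_one]
      _ ≤ (t.card : ℝ≥0∞) * ENNReal.ofReal (ε ^ Module.finrank ℝ X) := key2
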